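/- Let $p_1,\dots,p_k$ be distinct primes, and for each $i$ let $r_i \ge 1$ and $1 \le \alpha_{i1} \le \cdots \le \alpha_{i r_i}$ be integers. Let $G = \prod_{i=1}^k \prod_{j=1}^{r_i} \mathbb{Z}/p_i^{\alpha_{ij}}\mathbb{Z}$ (a finite abelian group in primary decomposition). Then $$\prod_{i=1}^k \ \sum_{\substack{1 \le m_i \le p_i^{\alpha_{i r_i}} \\ p_i \nmid m_i}} \ \prod_{j=1}^{r_i} \gcd(m_i - 1,\, p_i^{\alpha_{ij}}) \,=\, \varphi(\exp(G)) \cdot |L_1(G)|,$$ where $\exp(G)$ is the exponent of $G$, $\varphi$ is Euler's totient function, and $|L_1(G)|$ is the number of cyclic subgroups of $G$. -/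

import Mathlib

namespace Stmt0Aux

open Finset

variable {G : Type*} [AddCommGroup G]

lemma nsmul_mod_exponent (m : ℕ) (x : G) :
    (m % AddMonoid.exponent G) • x = m • x := by
  conv_rhs => rw [← Nat.mod_add_div m (AddMonoid.exponent G)]
  rw [add_nsmul, mul_comm, mul_nsmul, AddMonoid.exponent_nsmul_eq_zero, add_zero]

lemma zsmul_congr (x : G) {a b : ℤ} (h : (addOrderOf x : ℤ) ∣ a - b) :
    a • x = b • x := by
  have h0 : (a - b) • x = 0 := addOrderOf_dvd_iff_zsmul_eq_zero.mp h
  rw [sub_smul, sub_eq_zero] at h0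
  exact h0

variable (G) in
/-- The action of units mod the exponent on `G`. -/
noncomputable instance expUnitsAction [Fintype G] :
    MulAction (ZMod (AddMonoid.exponent G))ˣ G where
  smul u x := ((u : ZMod (AddMonoid.exponent G)).val) • x
  one_smul x := by
    haveI : NeZero (AddMonoid.exponent G) := ⟨AddMonoid.exponent_ne_zero_of_finite⟩
    show ((1 : ZMod (AddMonoid.exponent G)).val) • x = x
    rw [← Nat.cast_one, ZMod.val_natCast, nsmul_mod_exponent, one_nsmul]
  mul_smul u v x := by
    show (((u : ZMod (AddMonoid.exponent G)) * (v : ZMod (AddMonoid.exponent G))).val) • x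
        = ((u : ZMod (AddMonoid.exponent G)).val) • (((v : ZMod (AddMonoid.exponent G)).val) • x)
    rw [ZMod.val_mul, nsmul_mod_exponent, mul_nsmul]
    exact smul_comm _ _ _

lemma expUnitsAction_smul_def [Fintype G] (u : (ZMod (AddMonoid.exponent G))ˣ) (x : G) :
    u • x = ((u : ZMod (AddMonoid.exponent G)).val) • x := rfl


lemma card_nsmul_fix (N : ℕ) [NeZero N] (m : ℕ) (hm : 1 ≤ m) :
    Nat.card {x : ZMod N // m • x = x} = Nat.gcd (m - 1) N := by
  set c : ZMod N := ((m - 1 : ℕ) : ZMod N) with hc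
  have key : ∀ x : ZMod N, m • x = x ↔ c * x = 0 := by
    intro x
    have h1 : m • x = (m - 1) • x + x := by
      rw [← succ_nsmul]; congr 1; omega
    rw [h1, add_eq_right, hc, nsmul_eq_mul]
  have e1 : Nat.card {x : ZMod N // m • x = x}
      = Nat.card (AddMonoidHom.mulLeft c).ker := by
    apply Nat.card_congr
    exact Equiv.subtypeEquivRight fun x => by
      rw [key]; exact Iff.rfl
  have hrange : (AddMonoidHom.mulLeft c).range = AddSubgroup.zmultiples c := by
    ext y
    simp only [AddMonoidHom.mem_range, AddSubgroup.mem_zmultiples_iff]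
    constructor
    · rintro ⟨x, rfl⟩
      refine ⟨x.val, ?_⟩
      show (x.val : ℤ) • c = AddMonoidHom.mulLeft c x
      rw [natCast_zsmul, nsmul_eq_mul, ZMod.natCast_val, ZMod.cast_id]
      show (x : ZMod N) * c = c * x
      rw [mul_comm]
    · rintro ⟨n, rfl⟩
      refine ⟨(n : ZMod N), ?_⟩
      show c * (n : ZMod N) = n • c
      rw [zsmul_eq_mul, mul_comm]
  have hcardrange : Nat.card (AddMonoidHom.mulLeft c).range = N / N.gcd (m - 1) := by
    rw [hrange, Nat.card_zmultiples, hc, ZMod.addOrderOf_coe _ (NeZero.ne N)]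
  have htot := AddSubgroup.card_eq_card_quotient_mul_card_addSubgroup
    (AddMonoidHom.mulLeft c).ker
  have hquot : Nat.card (ZMod N ⧸ (AddMonoidHom.mulLeft c).ker)
      = N / N.gcd (m - 1) := by
    rw [Nat.card_congr (QuotientAddGroup.quotientKerEquivRange (AddMonoidHom.mulLeft c)).toEquiv,
      hcardrange]
  rw [Nat.card_zmod, hquot] at htot
  have hgd : N.gcd (m - 1) ∣ N := Nat.gcd_dvd_left _ _
  have hgpos : 0 < N.gcd (m - 1) := Nat.gcd_pos_of_pos_left _ (NeZero.pos N)
  have hdivpos : 0 < N / N.gcd (m - 1) := Nat.div_pos (Nat.le_of_dvd (NeZero.pos N) hgd) hgpos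
  rw [e1, Nat.gcd_comm]
  have : N / N.gcd (m - 1) * Nat.card (AddMonoidHom.mulLeft c).ker
      = N / N.gcd (m - 1) * N.gcd (m - 1) := by
    rw [← htot, Nat.div_mul_cancel hgd]
  exact Nat.eq_of_mul_eq_mul_left hdivpos this


section Orbits

variable (G : Type*) [AddCommGroup G] [Fintype G]

omit [Fintype G] in
lemma isAddCyclic_zmultiples (x : G) : IsAddCyclic (AddSubgroup.zmultiples x) := by
  refine ⟨⟨x, AddSubgroup.mem_zmultiples x⟩, ?_⟩
  rintro ⟨y, hy⟩
  obtain ⟨k, hk⟩ := AddSubgroup.mem_zmultiples_iff.mp hy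
  exact AddSubgroup.mem_zmultiples_iff.mpr ⟨k, Subtype.ext (by simpa using hk)⟩

noncomputable def orbitEquivCyclic :
    Quotient (MulAction.orbitRel (ZMod (AddMonoid.exponent G))ˣ G) ≃
      {H : AddSubgroup G // IsAddCyclic H} := by
  haveI : NeZero (AddMonoid.exponent G) := ⟨AddMonoid.exponent_ne_zero_of_finite⟩
  refine Equiv.ofBijective
    (Quotient.lift
      (fun x => (⟨AddSubgroup.zmultiples x, isAddCyclic_zmultiples G x⟩ :
        {H : AddSubgroup G // IsAddCyclic H})) ?_) ⟨?_, ?_⟩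
  · -- well-defined
    intro a b hab
    replace hab : a ∈ MulAction.orbit (ZMod (AddMonoid.exponent G))ˣ b := hab
    obtain ⟨u, rfl⟩ := MulAction.mem_orbit_iff.mp hab
    refine Subtype.ext (le_antisymm ?_ ?_)
    · refine AddSubgroup.zmultiples_le.mpr ?_
      rw [expUnitsAction_smul_def]
      exact AddSubgroup.mem_zmultiples_iff.mpr
        ⟨(((u : ZMod (AddMonoid.exponent G)).val : ℤ)), natCast_zsmul _ _⟩
    · refine AddSubgroup.zmultiples_le.mpr ?_
      refine AddSubgroup.mem_zmultiples_iff.mpr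
        ⟨(((u⁻¹ : (ZMod (AddMonoid.exponent G))ˣ) : ZMod (AddMonoid.exponent G)).val : ℤ), ?_⟩
      rw [natCast_zsmul, ← expUnitsAction_smul_def, inv_smul_smul]
  · -- injective
    rintro ⟨a⟩ ⟨b⟩ h
    have hz : AddSubgroup.zmultiples a = AddSubgroup.zmultiples b := congrArg Subtype.val h
    obtain ⟨n, hn⟩ := AddSubgroup.mem_zmultiples_iff.mp
      (hz ▸ AddSubgroup.mem_zmultiples a)
    obtain ⟨m, hm⟩ := AddSubgroup.mem_zmultiples_iff.mp
      (hz.symm ▸ AddSubgroup.mem_zmultiples b)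
    -- hn : n • b = a, hm : m • a = b
    set d : ℕ := addOrderOf b with hd
    have hmn : ((m * n) • b : G) = b := by rw [mul_zsmul, hn, hm]
    have hdvd : (d : ℤ) ∣ m * n - 1 := by
      rw [addOrderOf_dvd_iff_zsmul_eq_zero, sub_smul, one_smul, sub_eq_zero, hmn]
    have hde : d ∣ AddMonoid.exponent G := AddMonoid.addOrder_dvd_exponent b
    have hval : ((n : ZMod d) * (m : ZMod d)) = 1 := by
      have : (((n * m - 1 : ℤ)) : ZMod d) = 0 := by
        rw [ZMod.intCast_zmod_eq_zero_iff_dvd]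
        rw [mul_comm] at hdvd; exact hdvd
      push_cast at this
      linear_combination this
    let w : (ZMod d)ˣ := ⟨(n : ZMod d), (m : ZMod d), hval, by rw [mul_comm] at hval; exact hval⟩
    obtain ⟨u, hu⟩ := ZMod.unitsMap_surjective hde w
    refine Quotient.sound (show a ∈ MulAction.orbit (ZMod (AddMonoid.exponent G))ˣ b from
      MulAction.mem_orbit_iff.mpr ⟨u, ?_⟩)
    rw [expUnitsAction_smul_def]
    have hcast : ((((u : ZMod (AddMonoid.exponent G)).val : ℕ)) : ZMod d) = ((n : ℤ) : ZMod d) := by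
      have h1 : (ZMod.unitsMap hde u : ZMod d) = (w : ZMod d) := by rw [hu]
      have h2 : (ZMod.unitsMap hde u : ZMod d)
          = ZMod.castHom hde (ZMod d) (u : ZMod (AddMonoid.exponent G)) := rfl
      rw [h2] at h1
      have h3 : ((u : ZMod (AddMonoid.exponent G)) : ZMod (AddMonoid.exponent G))
          = (((u : ZMod (AddMonoid.exponent G)).val : ℕ) : ZMod (AddMonoid.exponent G)) := by
        rw [ZMod.natCast_val, ZMod.cast_id]
      rw [h3, map_natCast] at h1
      rw [h1]
    have : ((((u : ZMod (AddMonoid.exponent G)).val : ℕ) : ℤ)) • b = n • b := by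
      apply zsmul_congr
      have h4' : ((((u : ZMod (AddMonoid.exponent G)).val : ℤ)) : ZMod d)
          = ((n : ℤ) : ZMod d) := by exact_mod_cast hcast
      exact ((ZMod.intCast_eq_intCast_iff _ _ _).mp h4').symm.dvd
    rw [← natCast_zsmul, this, hn]
  · -- surjective
    rintro ⟨H, hH⟩
    obtain ⟨⟨g, hgH⟩, hgen⟩ := hH.exists_generator
    refine ⟨Quotient.mk _ g, ?_⟩
    refine Subtype.ext ?_
    show AddSubgroup.zmultiples g = H
    ext z
    constructor
    · intro hz
      obtain ⟨k, hk⟩ := AddSubgroup.mem_zmultiples_iff.mp hz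
      exact hk ▸ AddSubgroup.zsmul_mem H hgH k
    · intro hz
      obtain ⟨k, hk⟩ := AddSubgroup.mem_zmultiples_iff.mp (hgen ⟨z, hz⟩)
      exact AddSubgroup.mem_zmultiples_iff.mpr ⟨k, by simpa using congrArg Subtype.val hk⟩

theorem abstract_sum [NeZero (AddMonoid.exponent G)] :
    ∑ u : (ZMod (AddMonoid.exponent G))ˣ,
        Nat.card {x : G // ((u : ZMod (AddMonoid.exponent G)).val) • x = x}
      = Nat.totient (AddMonoid.exponent G) *
          Nat.card {H : AddSubgroup G // IsAddCyclic H} := by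
  classical
  haveI : ∀ u : (ZMod (AddMonoid.exponent G))ˣ, Fintype (MulAction.fixedBy G u) :=
    fun u => Fintype.ofFinite _
  haveI : Fintype (Quotient (MulAction.orbitRel (ZMod (AddMonoid.exponent G))ˣ G)) :=
    Fintype.ofFinite _
  have burn := MulAction.sum_card_fixedBy_eq_card_orbits_mul_card_group
    (ZMod (AddMonoid.exponent G))ˣ G
  have h1 : ∀ u : (ZMod (AddMonoid.exponent G))ˣ,
      Nat.card {x : G // ((u : ZMod (AddMonoid.exponent G)).val) • x = x}
        = Fintype.card (MulAction.fixedBy G u) := by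
    intro u
    rw [← Nat.card_eq_fintype_card]
    apply Nat.card_congr
    exact Equiv.subtypeEquivRight fun x => by
      rw [MulAction.mem_fixedBy, expUnitsAction_smul_def]
  simp only [h1]
  rw [burn]
  rw [← Nat.card_eq_fintype_card (α := Quotient (MulAction.orbitRel _ G)),
    Nat.card_congr (orbitEquivCyclic G), ZMod.card_units_eq_totient, mul_comm]

end Orbits


lemma lcm_eq_prod {ι : Type*} [DecidableEq ι] (s : Finset ι) (f : ι → ℕ)
    (h : Set.Pairwise ↑s (Function.onFun Nat.Coprime f)) : s.lcm f = ∏ i ∈ s, f i := by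
  induction s using Finset.induction with
  | empty => simp
  | @insert a s ha ih =>
    rw [Finset.lcm_insert, Finset.prod_insert ha,
      ih (h.mono (by simp [Finset.subset_insert]))]
    have hcop : Nat.Coprime (f a) (∏ i ∈ s, f i) := by
      apply Nat.Coprime.prod_right
      intro i hi
      exact h (Finset.mem_insert_self a s)
        (Finset.mem_insert_of_mem hi) (by rintro rfl; exact ha hi)
    rw [lcm_eq_nat_lcm, Nat.Coprime.lcm_eq_mul hcop]

lemma gcd_congr_mod {a b n N : ℕ} (hn : n ∣ N) (h : a ≡ b [MOD N]) (ha : 1 ≤ a) (hb : 1 ≤ b) :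
    Nat.gcd (a - 1) n = Nat.gcd (b - 1) n := by
  have h2 : a ≡ b [MOD n] := h.of_dvd hn
  have h3 : (a - 1) + 1 ≡ (b - 1) + 1 [MOD n] := by
    rwa [Nat.sub_add_cancel ha, Nat.sub_add_cancel hb]
  have h' : (a - 1) % n = (b - 1) % n := Nat.ModEq.add_right_cancel' 1 h3
  calc Nat.gcd (a - 1) n = Nat.gcd n (a - 1) := Nat.gcd_comm _ _
    _ = Nat.gcd ((a - 1) % n) n := Nat.gcd_rec _ _
    _ = Nat.gcd ((b - 1) % n) n := by rw [h']
    _ = Nat.gcd n (b - 1) := (Nat.gcd_rec _ _).symm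
    _ = Nat.gcd (b - 1) n := Nat.gcd_comm _ _

lemma sum_filter_Icc_eq_sum_units {P A : ℕ} [NeZero (P ^ A)] (hP : P.Prime) (hA : 1 ≤ A)
    (f : ℕ → ℕ) :
    ∑ m ∈ (Finset.Icc 1 (P ^ A)).filter (fun m => ¬ P ∣ m), f m
      = ∑ v : (ZMod (P ^ A))ˣ, f (v : ZMod (P ^ A)).val := by
  haveI : Fact (1 < P ^ A) := ⟨Nat.one_lt_pow (by omega) hP.one_lt⟩
  have hPN : P ∣ P ^ A := dvd_pow_self P (by omega)
  have hmem : ∀ m ∈ (Finset.Icc 1 (P ^ A)).filter (fun m => ¬ P ∣ m), m.Coprime (P ^ A) := by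
    intro m hm
    simp only [Finset.mem_filter, Finset.mem_Icc] at hm
    exact Nat.Coprime.pow_right _ ((hP.coprime_iff_not_dvd.mpr hm.2).symm)
  have hlt : ∀ m ∈ (Finset.Icc 1 (P ^ A)).filter (fun m => ¬ P ∣ m), m < P ^ A := by
    intro m hm
    simp only [Finset.mem_filter, Finset.mem_Icc] at hm
    rcases eq_or_lt_of_le hm.1.2 with h | h
    · exact absurd (by rw [h]; exact hPN) hm.2
    · exact h
  refine Finset.sum_bij' (fun m hm => ZMod.unitOfCoprime m (hmem m hm))
    (fun v _ => (v : ZMod (P ^ A)).val) ?_ ?_ ?_ ?_ ?_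
  · intro m hm; exact Finset.mem_univ _
  · intro v _
    simp only [Finset.mem_filter, Finset.mem_Icc]
    have hval : (v : ZMod (P ^ A)).val ≠ 0 := by
      rw [Ne, ZMod.val_eq_zero]
      exact v.ne_zero
    refine ⟨⟨by omega, le_of_lt (ZMod.val_lt _)⟩, ?_⟩
    intro hdvd
    have h1 : P ∣ Nat.gcd ((v : ZMod (P ^ A)).val) (P ^ A) := Nat.dvd_gcd hdvd hPN
    rw [ZMod.val_coe_unit_coprime v] at h1
    exact absurd (Nat.le_of_dvd Nat.one_pos h1) (by have := hP.one_lt; omega)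
  · intro m hm
    simp only [ZMod.coe_unitOfCoprime, ZMod.val_natCast]
    exact Nat.mod_eq_of_lt (hlt m hm)
  · intro v _
    apply Units.ext
    simp [ZMod.natCast_val, ZMod.cast_id]
  · intro m hm
    congr 1
    simp only [ZMod.coe_unitOfCoprime, ZMod.val_natCast]
    exact (Nat.mod_eq_of_lt (hlt m hm)).symm

theorem abstract_sum' (G : Type*) [AddCommGroup G] [Fintype G] (e : ℕ) [NeZero e]
    (he : AddMonoid.exponent G = e) :
    ∑ u : (ZMod e)ˣ, Nat.card {x : G // ((u : ZMod e).val) • x = x}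
      = Nat.totient e * Nat.card {H : AddSubgroup G // IsAddCyclic H} := by
  subst he
  exact abstract_sum G

end Stmt0Aux

open Stmt0Aux in
theorem stmt0 (k : ℕ) (p : Fin k → ℕ) (hp : ∀ i, (p i).Prime)
    (hinj : Function.Injective p)
    (r : Fin k → ℕ) (hr : ∀ i, 1 ≤ r i)
    (α : (i : Fin k) → Fin (r i) → ℕ)
    (hα1 : ∀ i j, 1 ≤ α i j)
    (hmono : ∀ i, Monotone (α i)) :
    (∏ i : Fin k,
      ∑ m ∈ (Finset.Icc 1 (p i ^ α i ⟨r i - 1, by have := hr i; omega⟩)).filter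
          (fun m => ¬ p i ∣ m),
        ∏ j : Fin (r i), Nat.gcd (m - 1) (p i ^ α i j))
    = Nat.totient (AddMonoid.exponent (∀ i : Fin k, ∀ j : Fin (r i), ZMod (p i ^ α i j))) *
        Nat.card {H : AddSubgroup (∀ i : Fin k, ∀ j : Fin (r i), ZMod (p i ^ α i j)) //
          IsAddCyclic H} := by
  classical
  haveI hNZ : ∀ (i : Fin k) (j : Fin (r i)), NeZero (p i ^ α i j) :=
    fun i j => ⟨pow_ne_zero _ (hp i).ne_zero⟩
  have hrpos : ∀ i : Fin k, r i - 1 < r i := fun i => by have := hr i; omega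
  set q : Fin k → ℕ := fun i => p i ^ α i ⟨r i - 1, hrpos i⟩ with hqdef
  have hApos : ∀ i, 1 ≤ α i ⟨r i - 1, hrpos i⟩ := fun i => hα1 i _
  have hq1 : ∀ i, 1 < q i := fun i =>
    Nat.one_lt_pow (by have := hApos i; omega) (hp i).one_lt
  haveI hqNZ : ∀ i, NeZero (q i) := fun i => ⟨by have := hq1 i; omega⟩
  have hco : Pairwise (Function.onFun Nat.Coprime q) := by
    intro i j hij
    exact Nat.Coprime.pow _ _
      ((Nat.coprime_primes (hp i) (hp j)).mpr fun h => hij (hinj h))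
  have hdvdq : ∀ i, q i ∣ ∏ i, q i := fun i => Finset.dvd_prod_of_mem _ (Finset.mem_univ i)
  have hdvd : ∀ i (j : Fin (r i)), p i ^ α i j ∣ q i := fun i j =>
    pow_dvd_pow _ (hmono i (by rw [Fin.le_def]; have := j.2; simp; omega))
  haveI hprodNZ : NeZero (∏ i, q i) :=
    ⟨Finset.prod_ne_zero_iff.mpr fun i _ => NeZero.ne (q i)⟩
  have hexp : AddMonoid.exponent (∀ i : Fin k, ∀ j : Fin (r i), ZMod (p i ^ α i j))
      = ∏ i, q i := by
    rw [AddMonoid.exponent_pi]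
    have inner : ∀ i, AddMonoid.exponent (∀ j : Fin (r i), ZMod (p i ^ α i j)) = q i := by
      intro i
      rw [AddMonoid.exponent_pi]
      simp only [ZMod.exponent]
      apply dvd_antisymm
      · exact Finset.lcm_dvd fun j _ => hdvd i j
      · exact Finset.dvd_lcm (Finset.mem_univ _)
    simp only [inner]
    exact lcm_eq_prod _ _ (hco.set_pairwise _)
  -- CRT
  let Φ : ZMod (∏ i, q i) ≃+* ∀ i, ZMod (q i) := ZMod.prodEquivPi q hco
  have hΦ : ∀ (x : ZMod (∏ i, q i)) i,
      Φ x i = ZMod.castHom (hdvdq i) (ZMod (q i)) x := by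
    intro x i
    have h := Subsingleton.elim
      ((Pi.evalRingHom (fun i => ZMod (q i)) i).comp
        (Φ : ZMod (∏ i, q i) →+* ∀ i, ZMod (q i)))
      (ZMod.castHom (hdvdq i) (ZMod (q i)))
    exact DFunLike.congr_fun h x
  let F : (ZMod (∏ i, q i))ˣ → ∀ i, (ZMod (q i))ˣ := fun u i => ZMod.unitsMap (hdvdq i) u
  have hFval : ∀ u i, ((F u i : ZMod (q i)))
      = ZMod.castHom (hdvdq i) (ZMod (q i)) (u : ZMod (∏ i, q i)) := fun u i => rfl
  have hFbij : Function.Bijective F := by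
    constructor
    · intro u v huv
      apply Units.ext
      apply Φ.injective
      funext i
      rw [hΦ, hΦ]
      exact congrArg Units.val (congrFun huv i)
    · intro w
      have hunit : IsUnit ((fun i => ((w i : ZMod (q i)))) : ∀ i, ZMod (q i)) :=
        ⟨⟨fun i => (w i : ZMod (q i)),
          fun i => (((w i)⁻¹ : (ZMod (q i))ˣ) : ZMod (q i)),
          funext fun i => Units.mul_inv _, funext fun i => Units.inv_mul _⟩, rfl⟩
      have hx : IsUnit (Φ.symm ((fun i => ((w i : ZMod (q i)))) : ∀ i, ZMod (q i))) :=
        hunit.map (Φ.symm : (∀ i, ZMod (q i)) →+* ZMod (∏ i, q i))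
      obtain ⟨u, hu⟩ := hx
      refine ⟨u, ?_⟩
      funext i
      apply Units.ext
      rw [hFval, ← hΦ, hu]
      show Φ (Φ.symm _) i = _
      rw [RingEquiv.apply_symm_apply]
  have hval1 : ∀ (u : (ZMod (∏ i, q i))ˣ) (i : Fin k), 1 ≤ (u : ZMod (∏ i, q i)).val := by
    intro u i
    haveI : Fact (1 < ∏ i, q i) :=
      ⟨lt_of_lt_of_le (hq1 i) (Nat.le_of_dvd (Nat.pos_of_ne_zero (NeZero.ne _)) (hdvdq i))⟩
    have h0 : (u : ZMod (∏ i, q i)) ≠ 0 := Units.ne_zero u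
    have := (not_iff_not.mpr (ZMod.val_eq_zero (n := ∏ i, q i) _)).mpr h0
    omega
  have hvalF : ∀ u i, ((F u i : ZMod (q i))).val = (u : ZMod (∏ i, q i)).val % q i := by
    intro u i
    rw [hFval]
    conv_lhs => rw [show ((u : ZMod (∏ i, q i)))
      = (((u : ZMod (∏ i, q i)).val : ℕ) : ZMod (∏ i, q i)) from by
        rw [ZMod.natCast_val, ZMod.cast_id]]
    rw [map_natCast, ZMod.val_natCast]
  have hgcd : ∀ (u : (ZMod (∏ i, q i))ˣ) (i : Fin k) (j : Fin (r i)),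
      Nat.gcd (((F u i : ZMod (q i))).val - 1) (p i ^ α i j)
        = Nat.gcd ((u : ZMod (∏ i, q i)).val - 1) (p i ^ α i j) := by
    intro u i j
    have h1 : 1 ≤ ((F u i : ZMod (q i))).val := by
      haveI : Fact (1 < q i) := ⟨hq1 i⟩
      have h0 : ((F u i : ZMod (q i))) ≠ 0 := Units.ne_zero _
      have := (not_iff_not.mpr (ZMod.val_eq_zero (n := q i) _)).mpr h0
      omega
    have h2 : 1 ≤ (u : ZMod (∏ i, q i)).val := hval1 u i
    rw [hvalF] at h1 ⊢
    exact gcd_congr_mod (hdvd i j) (Nat.mod_modEq _ _) h1 h2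
  have hcard : ∀ u : (ZMod (∏ i, q i))ˣ,
      (∏ i, ∏ j : Fin (r i), Nat.gcd ((u : ZMod (∏ i, q i)).val - 1) (p i ^ α i j))
        = Nat.card {x : (∀ i : Fin k, ∀ j : Fin (r i), ZMod (p i ^ α i j)) //
            ((u : ZMod (∏ i, q i)).val) • x = x} := by
    intro u
    set m := (u : ZMod (∏ i, q i)).val with hm
    have e1 : {x : (∀ i : Fin k, ∀ j : Fin (r i), ZMod (p i ^ α i j)) // m • x = x}
        ≃ ∀ i, {y : ∀ j : Fin (r i), ZMod (p i ^ α i j) // m • y = y} :=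
      (Equiv.subtypeEquivRight
          (q := fun x : (∀ i : Fin k, ∀ j : Fin (r i), ZMod (p i ^ α i j)) =>
            ∀ i, m • x i = x i) fun x => funext_iff).trans
        (Equiv.subtypePiEquivPi
          (p := fun i (y : ∀ j : Fin (r i), ZMod (p i ^ α i j)) => m • y = y))
    rw [Nat.card_congr e1, Nat.card_pi]
    refine Finset.prod_congr rfl fun i _ => ?_
    have e2 : {y : ∀ j : Fin (r i), ZMod (p i ^ α i j) // m • y = y}
        ≃ ∀ j : Fin (r i), {z : ZMod (p i ^ α i j) // m • z = z} :=
      (Equiv.subtypeEquivRight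
          (q := fun y : (∀ j : Fin (r i), ZMod (p i ^ α i j)) =>
            ∀ j, m • y j = y j) fun y => funext_iff).trans
        (Equiv.subtypePiEquivPi
          (p := fun j (z : ZMod (p i ^ α i j)) => m • z = z))
    rw [Nat.card_congr e2, Nat.card_pi]
    exact Finset.prod_congr rfl fun j _ =>
      (card_nsmul_fix _ m (hval1 u i)).symm
  rw [hexp]
  calc (∏ i : Fin k,
      ∑ m ∈ (Finset.Icc 1 (p i ^ α i ⟨r i - 1, hrpos i⟩)).filter
          (fun m => ¬ p i ∣ m),
        ∏ j : Fin (r i), Nat.gcd (m - 1) (p i ^ α i j))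
      = ∏ i : Fin k, ∑ v : (ZMod (q i))ˣ,
          ∏ j : Fin (r i), Nat.gcd (((v : ZMod (q i))).val - 1) (p i ^ α i j) :=
        Finset.prod_congr rfl fun i _ =>
          sum_filter_Icc_eq_sum_units (hp i) (hApos i) _
    _ = ∑ w : ∀ i, (ZMod (q i))ˣ, ∏ i, ∏ j : Fin (r i),
          Nat.gcd (((w i : ZMod (q i))).val - 1) (p i ^ α i j) :=
        Fintype.prod_sum _
    _ = ∑ u : (ZMod (∏ i, q i))ˣ, ∏ i, ∏ j : Fin (r i),
          Nat.gcd (((F u i : ZMod (q i))).val - 1) (p i ^ α i j) :=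
        (hFbij.sum_comp _).symm
    _ = ∑ u : (ZMod (∏ i, q i))ˣ, ∏ i, ∏ j : Fin (r i),
          Nat.gcd ((u : ZMod (∏ i, q i)).val - 1) (p i ^ α i j) :=
        Finset.sum_congr rfl fun u _ => Finset.prod_congr rfl fun i _ =>
          Finset.prod_congr rfl fun j _ => hgcd u i j
    _ = ∑ u : (ZMod (∏ i, q i))ˣ,
          Nat.card {x : (∀ i : Fin k, ∀ j : Fin (r i), ZMod (p i ^ α i j)) //
            ((u : ZMod (∏ i, q i)).val) • x = x} :=
        Finset.sum_congr rfl fun u _ => hcard u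
    _ = Nat.totient (∏ i, q i) *
          Nat.card {H : AddSubgroup (∀ i : Fin k, ∀ j : Fin (r i), ZMod (p i ^ α i j)) //
            IsAddCyclic H} :=
        abstract_sum' _ _ hexp
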